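/- Let λ = √2 + 1 and let P₀(ξ) = 2πiξ − λ(e^{πiξ/√2} − 1) − λ^{-1}(1 − e^{−πiξ/√2}) and Q₀(ξ) = −λ(πi/√2)(e^{πiξ/√2} − 1) + λ^{-1}(πi/√2)(1 − e^{−πiξ/√2}). Then the first order linear ODE P₀(ξ)h′(ξ) + Q₀(ξ)h(ξ) = 0 has a solution ρ : (0, +∞) → ℂ (differentiable and satisfying the equation at every ξ > 0) such that for some δ > 0 and C > 0, |ρ(ξ) − ξ^{-2}| ≤ C ξ^{-1} for all 0 < ξ < δ. -/

import Mathlib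

noncomputable section

/-- The Bäcklund parameter λ = √2 + 1. -/
def lam : ℂ := ((Real.sqrt 2 + 1 : ℝ) : ℂ)

/-- P₀(ξ) = 2πiξ − λ(e^{πiξ/√2} − 1) − λ⁻¹(1 − e^{−πiξ/√2}). -/
def P0 (ξ : ℝ) : ℂ :=
  2 * (Real.pi : ℂ) * Complex.I * (ξ : ℂ)
  - lam * (Complex.exp ((Real.pi : ℂ) * Complex.I * (ξ : ℂ) / (Real.sqrt 2 : ℂ)) - 1)
  - lam⁻¹ * (1 - Complex.exp (-((Real.pi : ℂ) * Complex.I * (ξ : ℂ) / (Real.sqrt 2 : ℂ))))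

/-- Q₀(ξ) = −λ(πi/√2)(e^{πiξ/√2} − 1) + λ⁻¹(πi/√2)(1 − e^{−πiξ/√2}). -/
def Q0 (ξ : ℝ) : ℂ :=
  -lam * ((Real.pi : ℂ) * Complex.I / (Real.sqrt 2 : ℂ))
     * (Complex.exp ((Real.pi : ℂ) * Complex.I * (ξ : ℂ) / (Real.sqrt 2 : ℂ)) - 1)
  + lam⁻¹ * ((Real.pi : ℂ) * Complex.I / (Real.sqrt 2 : ℂ))
     * (1 - Complex.exp (-((Real.pi : ℂ) * Complex.I * (ξ : ℂ) / (Real.sqrt 2 : ℂ))))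

lemma sqrt2_pos : (0:ℝ) < Real.sqrt 2 := Real.sqrt_pos.mpr (by norm_num)
lemma sqrt2_sq : Real.sqrt 2 * Real.sqrt 2 = 2 := Real.mul_self_sqrt (by norm_num)
lemma sqrt2_le : Real.sqrt 2 ≤ 1.5 := by nlinarith [sqrt2_sq, sqrt2_pos]
lemma sqrt2_ge : (1:ℝ) ≤ Real.sqrt 2 := by nlinarith [sqrt2_sq, sqrt2_pos]
lemma sqrt2_sq_c : (Real.sqrt 2 : ℂ) * (Real.sqrt 2 : ℂ) = 2 := by
  rw [← Complex.ofReal_mul, sqrt2_sq]; norm_num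
lemma sqrt2_ne_c : (Real.sqrt 2 : ℂ) ≠ 0 := by
  simpa using sqrt2_pos.ne'
lemma lam_inv : lam⁻¹ = ((Real.sqrt 2 - 1 : ℝ) : ℂ) := by
  have h : lam * ((Real.sqrt 2 - 1 : ℝ) : ℂ) = 1 := by
    rw [lam]; push_cast; linear_combination sqrt2_sq_c
  exact (eq_inv_of_mul_eq_one_right h).symm ▸ rfl

lemma arg_eq (ξ : ℝ) : (Real.pi : ℂ) * Complex.I * (ξ : ℂ) / (Real.sqrt 2 : ℂ)
    = ((Real.pi * ξ / Real.sqrt 2 : ℝ) : ℂ) * Complex.I := by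
  push_cast; field_simp

lemma P0_eq (ξ : ℝ) : P0 ξ =
    ((2 * (1 - Real.cos (Real.pi * ξ / Real.sqrt 2)) : ℝ) : ℂ)
    + ((2 * Real.sqrt 2 * (Real.pi * ξ / Real.sqrt 2 - Real.sin (Real.pi * ξ / Real.sqrt 2)) : ℝ) : ℂ) * Complex.I := by
  set θ := Real.pi * ξ / Real.sqrt 2 with hθ
  have hpx : (Real.pi : ℂ) * ξ = (Real.sqrt 2 : ℂ) * θ := by
    rw [hθ]; push_cast; field_simp
  rw [P0, arg_eq ξ, lam_inv, lam, ← hθ]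
  rw [Complex.exp_mul_I, ← neg_mul, Complex.exp_mul_I]
  push_cast
  rw [Complex.cos_neg, Complex.sin_neg]
  linear_combination (2*Complex.I) * hpx

lemma arg_eq2 (ξ : ℝ) : (Real.pi : ℂ) * Complex.I * (ξ : ℂ) / (Real.sqrt 2 : ℂ)
    = ((Real.pi : ℂ) * Complex.I / (Real.sqrt 2 : ℂ)) * (ξ : ℂ) := by ring

lemma hasDerivAt_P0 (ξ : ℝ) : HasDerivAt P0 (Q0 ξ) ξ := by
  set c : ℂ := (Real.pi : ℂ) * Complex.I / (Real.sqrt 2 : ℂ) with hc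
  have hfun : P0 = fun x : ℝ =>
      2 * (Real.pi : ℂ) * Complex.I * (x : ℂ) - lam * (Complex.exp (c * x) - 1)
        - lam⁻¹ * (1 - Complex.exp (-(c * x))) := by
    funext x; rw [P0, arg_eq2 x]
  have hbase : ∀ x : ℝ, HasDerivAt (fun y : ℝ => c * (y : ℂ)) c x := by
    intro x
    simpa using (Complex.ofRealCLM.hasDerivAt (x := x)).const_mul c
  have h1 : HasDerivAt (fun x : ℝ => 2 * (Real.pi : ℂ) * Complex.I * (x : ℂ))
      (2 * (Real.pi : ℂ) * Complex.I) ξ := by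
    simpa using (Complex.ofRealCLM.hasDerivAt (x := ξ)).const_mul (2 * (Real.pi : ℂ) * Complex.I)
  have h2 : HasDerivAt (fun x : ℝ => lam * (Complex.exp (c * x) - 1))
      (lam * (Complex.exp (c * ξ) * c)) ξ :=
    (((hbase ξ).cexp).sub_const 1).const_mul lam
  have h3 : HasDerivAt (fun x : ℝ => lam⁻¹ * (1 - Complex.exp (-(c * x))))
      (lam⁻¹ * (-(Complex.exp (-(c * ξ)) * (-c)))) ξ :=
    ((((hbase ξ).neg).cexp).const_sub 1).const_mul lam⁻¹
  have hD := (h1.sub h2).sub h3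
  rw [hfun]
  convert hD using 1
  case e'_4 => rfl
  case e'_8 => rfl
  rw [Q0, arg_eq2 ξ, ← hc, lam_inv, lam]
  have h2pi : 2 * (Real.pi:ℂ) * Complex.I = (((Real.sqrt 2 + 1:ℝ):ℂ) + ((Real.sqrt 2 - 1:ℝ):ℂ)) * c := by
    rw [hc]; push_cast
    rw [mul_div_assoc', eq_div_iff sqrt2_ne_c]
    ring
  rw [h2pi]; push_cast; ring

lemma P0_im (ξ : ℝ) : (P0 ξ).im
    = 2 * Real.sqrt 2 * (Real.pi * ξ / Real.sqrt 2 - Real.sin (Real.pi * ξ / Real.sqrt 2)) := by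
  rw [P0_eq]
  simp only [Complex.add_im, Complex.mul_im, Complex.ofReal_im, Complex.ofReal_re,
    Complex.I_re, Complex.I_im]
  ring

lemma P0_ne (ξ : ℝ) (hξ : 0 < ξ) : P0 ξ ≠ 0 := by
  intro h
  have him := P0_im ξ
  rw [h, Complex.zero_im] at him
  set θ := Real.pi * ξ / Real.sqrt 2 with hθ
  have hθpos : 0 < θ := by rw [hθ]; positivity
  have hs := Real.sin_lt hθpos
  nlinarith [sqrt2_pos]

/-- The ODE P₀h′ + Q₀h = 0 has a solution on (0, +∞) behaving like ξ^{-2} at 0. -/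
theorem ode_solution_rho :
    ∃ ρ : ℝ → ℂ,
      (∀ ξ : ℝ, 0 < ξ →
        DifferentiableAt ℝ ρ ξ ∧ P0 ξ * deriv ρ ξ + Q0 ξ * ρ ξ = 0) ∧
      (∃ δ > (0:ℝ), ∃ C > (0:ℝ), ∀ ξ : ℝ, 0 < ξ → ξ < δ →
        ‖ρ ξ - ((ξ : ℂ)^2)⁻¹‖ ≤ C * ξ⁻¹) := by
  refine ⟨fun ξ => ((Real.pi : ℂ)^2 / 2) / P0 ξ, ?_, ?_⟩
  · intro ξ hξ
    have hne := P0_ne ξ hξ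
    have hP := hasDerivAt_P0 ξ
    have hd : HasDerivAt (fun x : ℝ => ((Real.pi : ℂ)^2 / 2) / P0 x)
        ((0 * P0 ξ - ((Real.pi : ℂ)^2 / 2) * Q0 ξ) / (P0 ξ)^2) ξ :=
      (hasDerivAt_const ξ ((Real.pi : ℂ)^2 / 2)).div hP hne
    refine ⟨hd.differentiableAt, ?_⟩
    rw [hd.deriv]
    field_simp
    ring
  · refine ⟨Real.sqrt 2 / (8 * Real.pi), by positivity, 8 * Real.pi, by positivity, ?_⟩
    intro ξ hξ hξδ
    set θ := Real.pi * ξ / Real.sqrt 2 with hθdef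
    have hθpos : 0 < θ := by rw [hθdef]; positivity
    have hθ8 : θ < 1/8 := by
      rw [hθdef, div_lt_iff₀ sqrt2_pos]
      have := (lt_div_iff₀ (by positivity : (0:ℝ) < 8 * Real.pi)).mp hξδ
      nlinarith [Real.pi_pos]
    have hθ1 : |θ| ≤ 1 := by rw [abs_of_pos hθpos]; linarith
    -- Taylor bounds
    have hcos := Real.cos_bound hθ1
    have hsin := Real.sin_bound hθ1
    have habs : |θ| = θ := abs_of_pos hθpos
    rw [habs] at hcos hsin
    have hθ4 : θ^4 ≤ θ^3 := by nlinarith [pow_pos hθpos 3, pow_pos hθpos 4]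
    have hre : |2 * (1 - Real.cos θ) - θ^2| ≤ θ^3 := by
      have : 2 * (1 - Real.cos θ) - θ^2 = -(2 * (Real.cos θ - (1 - θ^2/2))) := by ring
      rw [this, abs_neg, abs_mul, abs_of_nonneg (by norm_num : (0:ℝ) ≤ 2)]
      calc 2 * |Real.cos θ - (1 - θ^2/2)| ≤ 2 * (θ^4 * (5/96)) := by linarith [hcos]
        _ ≤ θ^3 := by nlinarith
    have him : |2 * Real.sqrt 2 * (θ - Real.sin θ)| ≤ 3 * θ^3 := by
      have h1 : |θ - Real.sin θ| ≤ θ^3/6 + θ^4 * (5/96) := by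
        have he : θ - Real.sin θ = -(Real.sin θ - (θ - θ^3/6)) + θ^3/6 := by ring
        rw [he]
        calc |-(Real.sin θ - (θ - θ^3/6)) + θ^3/6|
            ≤ |-(Real.sin θ - (θ - θ^3/6))| + |θ^3/6| := abs_add_le _ _
          _ = |Real.sin θ - (θ - θ^3/6)| + θ^3/6 := by
              rw [abs_neg, abs_of_nonneg (by positivity : (0:ℝ) ≤ θ^3/6)]
          _ ≤ θ^3/6 + θ^4 * (5/96) := by nlinarith [mul_pos (by linarith : (0:ℝ) < 1 - θ) (pow_pos hθpos 4)]
      rw [abs_mul, abs_of_nonneg (by positivity : (0:ℝ) ≤ 2 * Real.sqrt 2)]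
      nlinarith [sqrt2_le, sqrt2_pos, h1, abs_nonneg (θ - Real.sin θ)]
    -- norm bound on P0 - θ²
    have hdiff : ‖P0 ξ - ((θ^2 : ℝ) : ℂ)‖ ≤ 4 * θ^3 := by
      have : P0 ξ - ((θ^2 : ℝ) : ℂ)
          = ((2 * (1 - Real.cos θ) - θ^2 : ℝ) : ℂ)
            + ((2 * Real.sqrt 2 * (θ - Real.sin θ) : ℝ) : ℂ) * Complex.I := by
        rw [P0_eq, ← hθdef]; push_cast; ring
      rw [this]
      calc ‖_ + _‖ ≤ ‖((2 * (1 - Real.cos θ) - θ^2 : ℝ) : ℂ)‖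
            + ‖((2 * Real.sqrt 2 * (θ - Real.sin θ) : ℝ) : ℂ) * Complex.I‖ := norm_add_le _ _
        _ = |2 * (1 - Real.cos θ) - θ^2| + |2 * Real.sqrt 2 * (θ - Real.sin θ)| := by
            rw [norm_mul, Complex.norm_I, mul_one, Complex.norm_real, Complex.norm_real,
              Real.norm_eq_abs, Real.norm_eq_abs]
        _ ≤ θ^3 + 3 * θ^3 := add_le_add hre him
        _ = 4 * θ^3 := by ring
    have hPlow : θ^2/2 ≤ ‖P0 ξ‖ := by
      have h1 : ‖((θ^2 : ℝ) : ℂ)‖ - ‖((θ^2 : ℝ) : ℂ) - P0 ξ‖ ≤ ‖P0 ξ‖ := by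
        have h := norm_sub_norm_le (((θ^2 : ℝ) : ℂ)) ((((θ^2 : ℝ) : ℂ)) - P0 ξ)
        rwa [sub_sub_cancel] at h
      rw [norm_sub_rev] at h1
      have h2 : ‖((θ^2 : ℝ) : ℂ)‖ = θ^2 := by
        rw [Complex.norm_real, Real.norm_eq_abs, abs_of_pos (by positivity)]
      nlinarith [hdiff, h1]
    have hne := P0_ne ξ hξ
    have hξne : (ξ : ℂ) ≠ 0 := by exact_mod_cast hξ.ne'
    -- key algebraic identity
    have hθ2 : ((θ^2 : ℝ) : ℂ) = (Real.pi : ℂ)^2 * (ξ : ℂ)^2 / 2 := by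
      have hr : θ^2 = Real.pi^2 * ξ^2 / 2 := by
        rw [hθdef, div_pow]
        rw [Real.sq_sqrt (by norm_num : (0:ℝ) ≤ 2)]
        ring
      rw [hr]; push_cast; ring
    have hkey : ((Real.pi : ℂ)^2 / 2) / P0 ξ - ((ξ : ℂ)^2)⁻¹
        = (((θ^2 : ℝ) : ℂ) - P0 ξ) / (P0 ξ * (ξ : ℂ)^2) := by
      rw [hθ2]
      field_simp
    show ‖((Real.pi : ℂ)^2 / 2) / P0 ξ - ((ξ : ℂ)^2)⁻¹‖ ≤ 8 * Real.pi * ξ⁻¹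
    rw [hkey, norm_div, norm_mul]
    have hnξ : ‖(ξ : ℂ)^2‖ = ξ^2 := by
      rw [norm_pow, Complex.norm_real, Real.norm_eq_abs, abs_of_pos hξ]
    rw [hnξ, norm_sub_rev]
    have hPpos : 0 < ‖P0 ξ‖ := norm_pos_iff.mpr hne
    calc ‖P0 ξ - ((θ^2:ℝ):ℂ)‖ / (‖P0 ξ‖ * ξ^2) ≤ (4*θ^3) / ((θ^2/2) * ξ^2) :=
          div_le_div₀ (by positivity) hdiff (by positivity)
            (mul_le_mul_of_nonneg_right hPlow (by positivity))
      _ = 8 * θ / ξ^2 := by field_simp; ring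
      _ ≤ 8 * Real.pi * ξ⁻¹ := by
          rw [hθdef]
          rw [div_le_iff₀ (by positivity : (0:ℝ) < ξ^2)]
          have : 8 * (Real.pi * ξ / Real.sqrt 2) ≤ 8 * Real.pi * ξ := by
            have hds : Real.pi * ξ / Real.sqrt 2 ≤ Real.pi * ξ :=
              div_le_self (by positivity) sqrt2_ge
            linarith
          calc 8 * (Real.pi * ξ / Real.sqrt 2) ≤ 8 * Real.pi * ξ := this
            _ = 8 * Real.pi * ξ⁻¹ * ξ^2 := by field_simp
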